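/- Let k, d be positive integers, let f be an n-variable Boolean function with AI(f) = k, and let δ be a Boolean function with Hamming weight strictly less than min(2^{n-k}, 2^{d+1} - 1). Then |AI(f+δ) − AI(f)| ≤ d. -/

import Mathlib

open scoped BigOperators

abbrev BF (n : ℕ) := (Fin n → ZMod 2) → ZMod 2

/-- Algebraic degree of a Boolean function: the least `d` such that `f` is
represented by a multivariate polynomial of total degree at most `d`. -/
noncomputable def degB {n : ℕ} (f : BF n) : ℕ :=
  sInf {d | ∃ p : MvPolynomial (Fin n) (ZMod 2),
    (∀ x, MvPolynomial.eval x p = f x) ∧ p.totalDegree ≤ d}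

/-- Fast algebraic immunity. -/
noncomputable def FAI {n : ℕ} (f : BF n) : ℕ :=
  sInf {m | ∃ g : BF n, g ≠ 1 ∧ f * g ≠ 0 ∧ m = degB g + degB (f * g)}

/-- Minimum degree of a nonzero annihilator. -/
noncomputable def LDA {n : ℕ} (f : BF n) : ℕ :=
  sInf {m | ∃ g : BF n, g ≠ 0 ∧ f * g = 0 ∧ m = degB g}

noncomputable def AI {n : ℕ} (f : BF n) : ℕ := min (LDA f) (LDA (1 + f))

noncomputable def muk {n : ℕ} (k : ℕ) (f : BF n) : ℕ :=
  sInf {m | ∃ g : BF n, degB g ≤ k ∧ f * g ≠ 0 ∧ m = degB (f * g)}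

def wtB {n : ℕ} (f : BF n) : ℕ := (Finset.univ.filter (fun x => f x = 1)).card

def IsAffineAut {n : ℕ} (A : (Fin n → ZMod 2) → (Fin n → ZMod 2)) : Prop :=
  ∃ (L : (Fin n → ZMod 2) ≃ₗ[ZMod 2] (Fin n → ZMod 2)) (b : Fin n → ZMod 2),
    ∀ x, A x = L x + b

noncomputable def RMcode (n e : ℕ) :
    Submodule (ZMod 2) ((Fin n → ZMod 2) → ZMod 2) :=
  Submodule.span (ZMod 2) {f | ∃ p : MvPolynomial (Fin n) (ZMod 2),
    p.totalDegree ≤ e ∧ ∀ x, MvPolynomial.eval x p = f x}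

/-- The code obtained by keeping only the coordinates in `S`
(i.e. puncturing on the complement of `S`). -/
noncomputable def restrictCode {n : ℕ}
    (C : Submodule (ZMod 2) ((Fin n → ZMod 2) → ZMod 2))
    (S : Set (Fin n → ZMod 2)) : Submodule (ZMod 2) (S → ZMod 2) :=
  C.map (LinearMap.funLeft (ZMod 2) (ZMod 2) (Subtype.val : S → (Fin n → ZMod 2)))

noncomputable def dualCode {ι : Type*} [Fintype ι]
    (C : Submodule (ZMod 2) (ι → ZMod 2)) : Submodule (ZMod 2) (ι → ZMod 2) where
  carrier := {w | ∀ c ∈ C, ∑ i, w i * c i = 0}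
  add_mem' := by
    intro a b ha hb c hc
    simp only [Pi.add_apply, add_mul, Finset.sum_add_distrib, ha c hc, hb c hc, add_zero]
  zero_mem' := by intro c hc; simp
  smul_mem' := by
    intro r a ha c hc
    simp only [Pi.smul_apply, smul_eq_mul, mul_assoc, ← Finset.mul_sum, ha c hc, mul_zero]

noncomputable instance instFintypeSubsetBF {α : Type*} [Fintype α] (S : Set α) :
    Fintype ↥S := Fintype.ofFinite _

def suppB {n : ℕ} (f : BF n) : Set (Fin n → ZMod 2) := {x | f x = 1}


section Aux
open MvPolynomial
lemma zmod2_cases (a : ZMod 2) : a = 0 ∨ a = 1 := by fin_cases a; exacts [Or.inl rfl, Or.inr rfl]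

lemma zmod2_add_self (a : ZMod 2) : a + a = 0 := by
  rcases zmod2_cases a with h | h <;> simp [h] <;> decide

/-- every Boolean function has a polynomial representation -/
lemma exists_rep {n : ℕ} (f : BF n) : ∃ p : MvPolynomial (Fin n) (ZMod 2),
    ∀ x, MvPolynomial.eval x p = f x := by
  refine ⟨∑ a : Fin n → ZMod 2, MvPolynomial.C (f a) * ∏ i, (MvPolynomial.X i + MvPolynomial.C (a i) + 1), fun x => ?_⟩
  have key : ∀ a : Fin n → ZMod 2, (∏ i, (x i + a i + 1)) = if x = a then 1 else 0 := by
    intro a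
    by_cases h : x = a
    · subst h
      simp only [if_pos rfl]
      apply Finset.prod_eq_one
      intro i _
      rw [zmod2_add_self]
      simp
    · rw [if_neg h]
      obtain ⟨i, hi⟩ := Function.ne_iff.mp h
      apply Finset.prod_eq_zero (Finset.mem_univ i)
      have : x i + a i = 1 := by
        rcases zmod2_cases (x i) with h1 | h1 <;> rcases zmod2_cases (a i) with h2 | h2 <;>
          simp_all
      rw [this]; decide
  simp only [map_sum, map_mul, eval_C, map_prod, map_add, eval_X, map_one]
  rw [Finset.sum_congr rfl (fun a _ => by rw [key a])]
  simp

lemma degB_le {n : ℕ} (f : BF n) (p : MvPolynomial (Fin n) (ZMod 2))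
    (h : ∀ x, MvPolynomial.eval x p = f x) : degB f ≤ p.totalDegree :=
  Nat.sInf_le ⟨p, h, le_rfl⟩

lemma degB_spec {n : ℕ} (f : BF n) : ∃ p : MvPolynomial (Fin n) (ZMod 2),
    (∀ x, MvPolynomial.eval x p = f x) ∧ p.totalDegree ≤ degB f := by
  have hne : {d | ∃ p : MvPolynomial (Fin n) (ZMod 2),
      (∀ x, MvPolynomial.eval x p = f x) ∧ p.totalDegree ≤ d}.Nonempty := by
    obtain ⟨p, hp⟩ := exists_rep f
    exact ⟨p.totalDegree, p, hp, le_rfl⟩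
  exact Nat.sInf_mem hne

lemma degB_mul {n : ℕ} (f g : BF n) : degB (f * g) ≤ degB f + degB g := by
  obtain ⟨p, hp, hpd⟩ := degB_spec f
  obtain ⟨q, hq, hqd⟩ := degB_spec g
  calc degB (f * g) ≤ (p * q).totalDegree := degB_le _ _ (fun x => by
        simp [hp, hq])
    _ ≤ p.totalDegree + q.totalDegree := totalDegree_mul p q
    _ ≤ degB f + degB g := add_le_add hpd hqd

lemma degB_one {n : ℕ} : degB (1 : BF n) = 0 :=
  Nat.le_zero.mp (by simpa using degB_le (1 : BF n) 1 (fun x => by simp))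


lemma zmod2_cases' (a : ZMod 2) : a = 0 ∨ a = 1 := by fin_cases a; exacts [Or.inl rfl, Or.inr rfl]

lemma sum_zmod2 (F : ZMod 2 → ℕ) : ∑ b : ZMod 2, F b = F 0 + F 1 := by
  rw [show (Finset.univ : Finset (ZMod 2)) = {0, 1} by decide]
  simp

lemma card_cons_split {n : ℕ} (φ : (Fin (n+1) → ZMod 2) → Prop) [DecidablePred φ] :
    (Finset.univ.filter φ).card
      = (Finset.univ.filter (fun y : Fin n → ZMod 2 => φ (Fin.cons 0 y))).card
        + (Finset.univ.filter (fun y : Fin n → ZMod 2 => φ (Fin.cons 1 y))).card := by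
  classical
  rw [Finset.card_filter, Finset.card_filter, Finset.card_filter]
  rw [← Equiv.sum_comp (Fin.consEquiv (fun _ : Fin (n+1) => ZMod 2))
    (fun x => if φ x then 1 else 0)]
  rw [Fintype.sum_prod_type]
  rw [sum_zmod2 (fun b => ∑ y : Fin n → ZMod 2,
    if φ ((Fin.consEquiv (fun _ : Fin (n+1) => ZMod 2)) (b, y)) then 1 else 0)]
  congr 1

lemma wt_lower : ∀ (n : ℕ) (p : MvPolynomial (Fin n) (ZMod 2)),
    (∃ x, MvPolynomial.eval x p = 1) →
    2 ^ (n - p.totalDegree) ≤ (Finset.univ.filter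
      (fun x : Fin n → ZMod 2 => MvPolynomial.eval x p = 1)).card := by
  intro n
  induction n with
  | zero =>
    intro p ⟨x, hx⟩
    have hx2 : x ∈ Finset.univ.filter (fun x : Fin 0 → ZMod 2 => MvPolynomial.eval x p = 1) :=
      Finset.mem_filter.mpr ⟨Finset.mem_univ x, hx⟩
    have : 0 < (Finset.univ.filter (fun x : Fin 0 → ZMod 2 => MvPolynomial.eval x p = 1)).card :=
      Finset.card_pos.mpr ⟨x, hx2⟩
    simpa using this
  | succ n ih =>
    intro p ⟨x, hx⟩
    classical
    set P := MvPolynomial.finSuccEquiv (ZMod 2) n p with hP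
    set q0 : MvPolynomial (Fin n) (ZMod 2) := Polynomial.eval 0 P with hq0
    set q1 : MvPolynomial (Fin n) (ZMod 2) := Polynomial.eval 1 P with hq1
    have evalrel0 : ∀ y : Fin n → ZMod 2,
        MvPolynomial.eval (Fin.cons 0 y) p = MvPolynomial.eval y q0 := by
      intro y
      rw [MvPolynomial.eval_eq_eval_mv_eval', Polynomial.eval_zero_map]
    have evalrel1 : ∀ y : Fin n → ZMod 2,
        MvPolynomial.eval (Fin.cons 1 y) p = MvPolynomial.eval y q1 := by
      intro y
      rw [MvPolynomial.eval_eq_eval_mv_eval', Polynomial.eval_one_map]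
    have hm := fun (i : ℕ) (hi : P.coeff i ≠ 0) =>
      MvPolynomial.totalDegree_coeff_finSuccEquiv_add_le p i hi
    set m := p.totalDegree with hmdef
    have hq0c : q0 = P.coeff 0 := (Polynomial.coeff_zero_eq_eval_zero P).symm
    have hq0d : q0.totalDegree ≤ m := by
      by_cases h0 : P.coeff 0 = 0
      · rw [hq0c, h0]; simp
      · rw [hq0c]; simpa using hm 0 h0
    have sum_repr : Polynomial.eval (1 : MvPolynomial (Fin n) (ZMod 2)) P
        = ∑ i ∈ P.support, P.coeff i := by
      rw [Polynomial.eval_eq_sum, Polynomial.sum_def]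
      simp
    have hq1d : q1.totalDegree ≤ m := by
      rw [hq1, sum_repr]
      refine (MvPolynomial.totalDegree_finset_sum _ _).trans (Finset.sup_le ?_)
      intro i hi
      rw [Polynomial.mem_support_iff] at hi
      have h2 := hm i hi
      rw [← hP] at h2
      omega
    have split := card_cons_split (fun z : Fin (n+1) → ZMod 2 => MvPolynomial.eval z p = 1)
    have hx' : MvPolynomial.eval (Fin.cons (x 0) (Fin.tail x)) p = 1 := by
      rwa [Fin.cons_self_tail]
    rw [split]
    have e0 : Finset.univ.filter (fun y : Fin n → ZMod 2 =>
          MvPolynomial.eval (Fin.cons (0:ZMod 2) y) p = 1)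
        = Finset.univ.filter (fun y => MvPolynomial.eval y q0 = 1) :=
      Finset.filter_congr (fun y _ => by rw [evalrel0 y])
    have e1 : Finset.univ.filter (fun y : Fin n → ZMod 2 =>
          MvPolynomial.eval (Fin.cons (1:ZMod 2) y) p = 1)
        = Finset.univ.filter (fun y => MvPolynomial.eval y q1 = 1) :=
      Finset.filter_congr (fun y _ => by rw [evalrel1 y])
    rw [e0, e1]
    by_cases hcase : ∀ y, MvPolynomial.eval y q0 = MvPolynomial.eval y q1
    · -- case A : both q0 and q1 are nonzero as functions
      have h01 : (∃ y, MvPolynomial.eval y q0 = 1) ∧ (∃ y, MvPolynomial.eval y q1 = 1) := by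
        rcases zmod2_cases' (x 0) with hb | hb
        · have h := hx'
          rw [hb, evalrel0 (Fin.tail x)] at h
          exact ⟨⟨_, h⟩, ⟨_, by rw [← hcase]; exact h⟩⟩
        · have h := hx'
          rw [hb, evalrel1 (Fin.tail x)] at h
          exact ⟨⟨_, by rw [hcase]; exact h⟩, ⟨_, h⟩⟩
      have b0 := ih q0 h01.1
      have b1 := ih q1 h01.2
      calc 2 ^ (n + 1 - m)
          ≤ 2 ^ (n - q0.totalDegree) + 2 ^ (n - q1.totalDegree) := by
            have c0 : 2 ^ (n + 1 - m) ≤ 2 ^ (n - q0.totalDegree + 1) :=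
              Nat.pow_le_pow_right (by norm_num) (by omega)
            have c1 : 2 ^ (n + 1 - m) ≤ 2 ^ (n - q1.totalDegree + 1) :=
              Nat.pow_le_pow_right (by norm_num) (by omega)
            rw [pow_succ] at c0 c1
            omega
        _ ≤ _ := add_le_add b0 b1
    · -- case B : r = q0 + q1 is a nonzero function of total degree ≤ m - 1
      push_neg at hcase
      obtain ⟨y₀, hy₀⟩ := hcase
      set r : MvPolynomial (Fin n) (ZMod 2) := q0 + q1 with hr
      have hrval : MvPolynomial.eval y₀ r = 1 := by
        rw [hr, map_add]
        rcases zmod2_cases' (MvPolynomial.eval y₀ q0) with h1 | h1 <;>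
          rcases zmod2_cases' (MvPolynomial.eval y₀ q1) with h2 | h2
        · exact absurd (h1.trans h2.symm) hy₀
        · rw [h1, h2]; decide
        · rw [h1, h2]; decide
        · exact absurd (h1.trans h2.symm) hy₀
      have hrrepr : r = ∑ i ∈ P.support.filter (fun i => ¬ i = 0), P.coeff i := by
        have split2 : ∑ i ∈ P.support, P.coeff i
            = P.coeff 0 + ∑ i ∈ P.support.filter (fun i => ¬ i = 0), P.coeff i := by
          rw [← Finset.sum_filter_add_sum_filter_not P.support (fun i => i = 0)]
          congr 1
          rw [Finset.sum_filter, Finset.sum_ite_eq' P.support 0 (fun i => P.coeff i)]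
          by_cases h0 : (0:ℕ) ∈ P.support
          · rw [if_pos h0]
          · rw [if_neg h0]
            rw [Polynomial.notMem_support_iff] at h0
            rw [h0]
        rw [hr, hq0c, hq1, sum_repr, split2, ← add_assoc, CharTwo.add_self_eq_zero, zero_add]
      have hfilter_ne : (P.support.filter (fun i => ¬ i = 0)).Nonempty := by
        by_contra h
        rw [Finset.not_nonempty_iff_eq_empty] at h
        rw [h, Finset.sum_empty] at hrrepr
        rw [hrrepr] at hrval
        simp at hrval
      have hm1 : 1 ≤ m := by
        obtain ⟨i, hi⟩ := hfilter_ne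
        rw [Finset.mem_filter, Polynomial.mem_support_iff] at hi
        have h2 := hm i hi.1
        rw [← hP] at h2
        have := hi.2
        omega
      have hrd : r.totalDegree ≤ m - 1 := by
        rw [hrrepr]
        refine (MvPolynomial.totalDegree_finset_sum _ _).trans (Finset.sup_le ?_)
        intro i hi
        rw [Finset.mem_filter, Polynomial.mem_support_iff] at hi
        have h2 := hm i hi.1
        rw [← hP] at h2
        have := hi.2
        omega
      have bR := ih r ⟨y₀, hrval⟩
      have subset : (Finset.univ.filter (fun y : Fin n → ZMod 2 => MvPolynomial.eval y r = 1))
          ⊆ (Finset.univ.filter (fun y : Fin n → ZMod 2 => MvPolynomial.eval y q0 = 1))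
            ∪ (Finset.univ.filter (fun y : Fin n → ZMod 2 => MvPolynomial.eval y q1 = 1)) := by
        intro y hy
        rw [Finset.mem_filter] at hy
        rw [Finset.mem_union, Finset.mem_filter, Finset.mem_filter]
        have hy' := hy.2
        rw [hr, map_add] at hy'
        rcases zmod2_cases' (MvPolynomial.eval y q0) with h1 | h1 <;>
          rcases zmod2_cases' (MvPolynomial.eval y q1) with h2 | h2
        · rw [h1, h2] at hy'; exact absurd hy' (by decide)
        · exact Or.inr ⟨Finset.mem_univ y, h2⟩
        · exact Or.inl ⟨Finset.mem_univ y, h1⟩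
        · rw [h1, h2] at hy'; exact absurd hy' (by decide)
      calc 2 ^ (n + 1 - m) ≤ 2 ^ (n - r.totalDegree) :=
            Nat.pow_le_pow_right (by norm_num) (by omega)
        _ ≤ _ := bR
        _ ≤ _ := le_trans (Finset.card_le_card subset) (Finset.card_union_le _ _)


lemma zmod2_cases'' (a : ZMod 2) : a = 0 ∨ a = 1 := by fin_cases a; exacts [Or.inl rfl, Or.inr rfl]

lemma pi_add_self {n : ℕ} (w : Fin n → ZMod 2) : w + w = 0 := by
  funext i
  rcases zmod2_cases'' (w i) with h | h <;> simp [Pi.add_apply, h] <;> decide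

lemma two_le_pow (d : ℕ) : 2 ≤ 2 ^ (d+1) := by
  calc 2 = 2 ^ 1 := rfl
  _ ≤ 2 ^ (d+1) := Nat.pow_le_pow_right (by norm_num) (by omega)

lemma pow_pred_double {n : ℕ} (h : 1 ≤ n) : 2 ^ n = 2 ^ (n-1) + 2 ^ (n-1) := by
  conv_lhs => rw [show n = (n-1)+1 by omega]
  rw [pow_succ]
  ring

/-- for a nonzero vector v, exactly 2^(n-1) vectors a satisfy ⟨a,v⟩ = 0 -/
lemma ker_card {n : ℕ} (v : Fin n → ZMod 2) (hv : v ≠ 0) :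
    (Finset.univ.filter (fun a : Fin n → ZMod 2 => ∑ i, a i * v i = 0)).card = 2 ^ (n - 1) := by
  classical
  obtain ⟨j, hj'⟩ := Function.ne_iff.mp hv
  have hj : v j ≠ 0 := by simpa using hj'
  clear hj'
  have hj1 : v j = 1 := by
    rcases zmod2_cases'' (v j) with h | h
    · exact absurd h hj
    · exact h
  set φ : (Fin n → ZMod 2) → ZMod 2 := fun a => ∑ i, a i * v i with hφ
  have key : ∀ a, φ (a + Pi.single j 1) = φ a + 1 := by
    intro a
    rw [hφ]
    simp only [Pi.add_apply, add_mul, Finset.sum_add_distrib]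
    congr 1
    rw [Finset.sum_eq_single j]
    · simp [hj1]
    · intro i _ hi
      rw [Pi.single_eq_of_ne hi]
      ring
    · intro h; exact absurd (Finset.mem_univ j) h
  have cardeq : (Finset.univ.filter (fun a => φ a = 0)).card
      = (Finset.univ.filter (fun a => φ a = 1)).card := by
    apply Finset.card_bij (fun a _ => a + Pi.single j 1)
    · intro a ha
      rw [Finset.mem_filter] at ha ⊢
      rw [key a, ha.2]
      exact ⟨Finset.mem_univ _, by decide⟩
    · intro a ha b hb hab
      have := congrArg (fun x => x + Pi.single j (1:ZMod 2)) hab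
      simpa [add_assoc, pi_add_self] using this
    · intro b hb
      refine ⟨b + Pi.single j 1, ?_, ?_⟩
      · rw [Finset.mem_filter] at hb ⊢
        rw [key b, hb.2]
        exact ⟨Finset.mem_univ _, by decide⟩
      · simp [add_assoc, pi_add_self]
  have total : (Finset.univ.filter (fun a => φ a = 0)).card
      + (Finset.univ.filter (fun a => φ a = 1)).card = 2 ^ n := by
    rw [← Finset.card_union_of_disjoint]
    · have : (Finset.univ.filter (fun a => φ a = 0)) ∪ (Finset.univ.filter (fun a => φ a = 1))
          = Finset.univ := by
        apply Finset.eq_univ_of_forall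
        intro a
        rw [Finset.mem_union, Finset.mem_filter, Finset.mem_filter]
        rcases zmod2_cases'' (φ a) with h | h
        · exact Or.inl ⟨Finset.mem_univ _, h⟩
        · exact Or.inr ⟨Finset.mem_univ _, h⟩
      rw [this]
      simp [Finset.card_univ]
    · rw [Finset.disjoint_filter]
      intro a _ h0
      rw [h0]; decide
  have n1 : 1 ≤ n := by
    rcases j with ⟨jv, hjv⟩
    clear * - hjv
    omega
  have pow2 := pow_pred_double n1
  rw [cardeq]
  rw [cardeq] at total
  revert total pow2
  generalize (Finset.univ.filter (fun a : Fin n → ZMod 2 => φ a = 1)).card = c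
  intro total pow2
  omega

/-- interpolation: given ≤ 2^(d+1) - 2 points avoiding x₀, there is a polynomial of
degree ≤ d vanishing on the points and equal to 1 at x₀. -/
lemma interp {n : ℕ} (x₀ : Fin n → ZMod 2) : ∀ (d : ℕ) (T : Finset (Fin n → ZMod 2)),
    x₀ ∉ T → T.card ≤ 2 ^ (d+1) - 2 →
    ∃ p : MvPolynomial (Fin n) (ZMod 2), p.totalDegree ≤ d ∧
      MvPolynomial.eval x₀ p = 1 ∧ ∀ t ∈ T, MvPolynomial.eval t p = 0 := by
  intro d
  induction d with
  | zero =>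
    intro T _ hcard
    have : T = ∅ := Finset.card_eq_zero.mp (by omega)
    subst this
    exact ⟨1, by simp, by simp, by simp⟩
  | succ d ihd =>
    intro T hx₀ hcard
    classical
    rcases Finset.eq_empty_or_nonempty T with rfl | ⟨t₀, ht₀⟩
    · exact ⟨1, by simp, by simp, by simp⟩
    have hvne : t₀ + x₀ ≠ 0 := by
      intro h
      apply hx₀
      have : t₀ = x₀ := by
        funext i
        have := congrFun h i
        rcases zmod2_cases'' (t₀ i) with h1 | h1 <;> rcases zmod2_cases'' (x₀ i) with h2 | h2 <;>
          simp_all [Pi.add_apply]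
      rwa [← this]
    have n1 : 1 ≤ n := by
      by_contra h
      apply hvne
      funext i
      exact absurd i.2 (by omega)
    -- the averaging argument
    set A : Finset (Fin n → ZMod 2) := Finset.univ.filter (fun a => a ≠ 0) with hA
    have hAcard : A.card = 2 ^ n - 1 := by
      rw [hA, Finset.filter_ne']
      rw [Finset.card_erase_of_mem (Finset.mem_univ _), Finset.card_univ]
      simp
    have ct : ∀ t ∈ T, (A.filter (fun a => ∑ i, a i * (t i + x₀ i) = 0)).card
        = 2 ^ (n-1) - 1 := by
      intro t ht
      have hv : (fun i => t i + x₀ i) ≠ 0 := by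
        intro h
        apply hx₀
        have : t = x₀ := by
          funext i
          have := congrFun h i
          rcases zmod2_cases'' (t i) with h1 | h1 <;> rcases zmod2_cases'' (x₀ i) with h2 | h2 <;>
            simp_all
        rwa [← this]
      have base := ker_card (fun i => t i + x₀ i) hv
      have : A.filter (fun a => ∑ i, a i * (t i + x₀ i) = 0)
          = (Finset.univ.filter (fun a : Fin n → ZMod 2 => ∑ i, a i * (t i + x₀ i) = 0)).erase 0 := by
        ext a
        rw [Finset.mem_erase, Finset.mem_filter, hA, Finset.mem_filter, Finset.mem_filter]
        tauto
      rw [this, Finset.card_erase_of_mem, base]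
      rw [Finset.mem_filter]
      exact ⟨Finset.mem_univ _, by simp⟩
    -- double counting
    have dc : ∑ a ∈ A, (T.filter (fun t => ∑ i, a i * (t i + x₀ i) = 0)).card
        = T.card * (2 ^ (n-1) - 1) := by
      have swap : ∑ a ∈ A, (T.filter (fun t => ∑ i, a i * (t i + x₀ i) = 0)).card
          = ∑ t ∈ T, (A.filter (fun a => ∑ i, a i * (t i + x₀ i) = 0)).card := by
        simp only [Finset.card_filter]
        rw [Finset.sum_comm]
      rw [swap, Finset.sum_congr rfl ct, Finset.sum_const, smul_eq_mul]
    -- pigeonhole: some a works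
    have pigeon : ∃ a ∈ A, (T.filter (fun t => ∑ i, a i * (t i + x₀ i) = 0)).card
        ≤ 2 ^ (d+1) - 2 := by
      by_contra hcon
      push_neg at hcon
      have all_ge : ∀ a ∈ A, 2 ^ (d+1) - 1 ≤ (T.filter (fun t => ∑ i, a i * (t i + x₀ i) = 0)).card := by
        intro a ha
        have h1 := hcon a ha
        have h2 : 2 ≤ 2 ^ (d+1) := two_le_pow d
        revert h1
        generalize (T.filter (fun t => ∑ i, a i * (t i + x₀ i) = 0)).card = c
        intro h1
        clear * - h1 h2
        omega
      have lb : A.card * (2 ^ (d+1) - 1) ≤ T.card * (2 ^ (n-1) - 1) := by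
        rw [← dc]
        calc A.card * (2 ^ (d+1) - 1) = ∑ _a ∈ A, (2 ^ (d+1) - 1) := by
              rw [Finset.sum_const, smul_eq_mul]
          _ ≤ _ := Finset.sum_le_sum all_ge
      rw [hAcard] at lb
      -- arithmetic contradiction
      obtain ⟨M, hM⟩ : ∃ M, 2 ^ (n-1) = M + 1 :=
        ⟨2 ^ (n-1) - 1, by
          have h1 : 1 ≤ 2 ^ (n-1) := Nat.one_le_two_pow
          clear * - h1; omega⟩
      obtain ⟨E, hE⟩ : ∃ E, 2 ^ (d+1) = E + 2 := by
        refine ⟨2 ^ (d+1) - 2, ?_⟩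
        have h2 : 2 ≤ 2 ^ (d+1) := two_le_pow d
        clear * - h2; omega
      have h2n : 2 ^ n = 2 * 2 ^ (n-1) := by
        have := pow_pred_double n1
        clear * - this; omega
      rw [h2n, hM, hE] at lb
      have hTbound : T.card ≤ 2 ^ (d+2) - 2 := hcard
      have h2d2 : 2 ^ (d+2) = 2 * (E + 2) := by rw [show d+2 = (d+1)+1 from rfl, pow_succ, hE]; ring
      rw [h2d2] at hTbound
      have hTb2 : T.card ≤ 2*E + 2 := by clear * - hTbound; omega
      have lb2 : (2 * (M+1) - 1) * (E + 1) ≤ (2*E + 2) * M := by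
        calc (2 * (M+1) - 1) * (E + 1) ≤ T.card * M := lb
          _ ≤ (2*E + 2) * M := Nat.mul_le_mul_right M hTb2
      have expand : 2 * (M+1) - 1 = 2*M + 1 := by clear * -; omega
      rw [expand] at lb2
      clear * - lb2
      nlinarith [lb2]
    obtain ⟨a, haA, haT⟩ := pigeon
    -- inductive step
    set T' : Finset (Fin n → ZMod 2) := T.filter (fun t => ∑ i, a i * (t i + x₀ i) = 0) with hT'
    have hx₀T' : x₀ ∉ T' := fun h => hx₀ (Finset.mem_of_mem_filter _ h)
    obtain ⟨p', hp'd, hp'x₀, hp'T⟩ := ihd T' hx₀T' haT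
    set ℓ : MvPolynomial (Fin n) (ZMod 2) :=
      ∑ i, MvPolynomial.C (a i) * (MvPolynomial.X i + MvPolynomial.C (x₀ i)) with hℓ
    have evalℓ : ∀ x, MvPolynomial.eval x ℓ = ∑ i, a i * (x i + x₀ i) := by
      intro x
      rw [hℓ]
      simp
    refine ⟨(1 + ℓ) * p', ?_, ?_, ?_⟩
    · refine (MvPolynomial.totalDegree_mul _ _).trans ?_
      have h1ℓ : (1 + ℓ).totalDegree ≤ 1 := by
        refine (MvPolynomial.totalDegree_add _ _).trans ?_
        apply max_le
        · simp
        · rw [hℓ]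
          refine (MvPolynomial.totalDegree_finset_sum _ _).trans (Finset.sup_le ?_)
          intro i _
          refine (MvPolynomial.totalDegree_mul _ _).trans ?_
          have hc : (MvPolynomial.C (a i) : MvPolynomial (Fin n) (ZMod 2)).totalDegree = 0 :=
            MvPolynomial.totalDegree_C _
          have hx : (MvPolynomial.X i + MvPolynomial.C (x₀ i) : MvPolynomial (Fin n) (ZMod 2)).totalDegree ≤ 1 := by
            refine (MvPolynomial.totalDegree_add _ _).trans ?_
            apply max_le
            · exact le_of_eq (MvPolynomial.totalDegree_X _)
            · simp [MvPolynomial.totalDegree_C]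
          clear * - hc hx
          omega
      clear * - h1ℓ hp'd
      omega
    · rw [map_mul, map_add, evalℓ, hp'x₀]
      have : ∑ i, a i * (x₀ i + x₀ i) = 0 := by
        apply Finset.sum_eq_zero
        intro i _
        rw [CharTwo.add_self_eq_zero]
        ring
      rw [this]
      simp
    · intro t ht
      rw [map_mul]
      by_cases htT' : t ∈ T'
      · rw [hp'T t htT', mul_zero]
      · have : ∑ i, a i * (t i + x₀ i) = 1 := by
          rw [hT', Finset.mem_filter] at htT'
          rcases zmod2_cases'' (∑ i, a i * (t i + x₀ i)) with h | h
          · exact absurd ⟨ht, h⟩ htT'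
          · exact h
        rw [map_add, map_one, evalℓ, this]
        rw [show (1:ZMod 2) + 1 = 0 by decide, zero_mul]

end Aux


-- ============ assembly layer ============

lemma wtB_lower {n : ℕ} (g : BF n) (hg : g ≠ 0) : 2 ^ (n - degB g) ≤ wtB g := by
  classical
  obtain ⟨p, hp, hpd⟩ := degB_spec g
  obtain ⟨x, hx⟩ := Function.ne_iff.mp hg
  have hx1 : g x = 1 := by
    rcases zmod2_cases (g x) with h | h
    · exact absurd (by simpa using h) hx
    · exact h
  have key := wt_lower n p ⟨x, by rw [hp]; exact hx1⟩
  have eqcard : (Finset.univ.filter (fun y : Fin n → ZMod 2 => MvPolynomial.eval y p = 1))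
      = Finset.univ.filter (fun y => g y = 1) :=
    Finset.filter_congr (fun y _ => by rw [hp y])
  rw [eqcard] at key
  exact le_trans (Nat.pow_le_pow_right (by norm_num)
    (Nat.sub_le_sub_left hpd n)) key

lemma one_ne_zero_BF {n : ℕ} : (1 : BF n) ≠ 0 := by
  intro h
  have := congrFun h (fun _ => 0)
  simp at this

lemma LDA_le' {n : ℕ} (F G : BF n) (hG : G ≠ 0) (h : F * G = 0) : LDA F ≤ degB G :=
  Nat.sInf_le ⟨G, hG, h, rfl⟩

lemma LDA_zero {n : ℕ} : LDA (0 : BF n) = 0 :=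
  Nat.le_zero.mp (le_trans (LDA_le' 0 1 one_ne_zero_BF (by funext x; simp)) (le_of_eq degB_one))

lemma mul_one_add_self {n : ℕ} (F : BF n) : F * (1 + F) = 0 := by
  funext x
  simp only [Pi.mul_apply, Pi.add_apply, Pi.one_apply, Pi.zero_apply]
  rcases zmod2_cases (F x) with h | h <;> rw [h] <;> decide

lemma one_add_ne_zero {n : ℕ} (F : BF n) (hF : F ≠ 1) : 1 + F ≠ 0 := by
  intro h
  apply hF
  funext x
  have := congrFun h x
  simp only [Pi.add_apply, Pi.one_apply, Pi.zero_apply] at this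
  rcases zmod2_cases (F x) with h1 | h1
  · rw [h1] at this; exact absurd this (by decide)
  · rw [h1]; rfl

lemma annihilator_exists {n : ℕ} (F : BF n) (hF : F ≠ 1) :
    ∃ G : BF n, G ≠ 0 ∧ F * G = 0 ∧ degB G = LDA F := by
  have hmem : LDA F ∈ {m | ∃ g : BF n, g ≠ 0 ∧ F * g = 0 ∧ m = degB g} :=
    Nat.sInf_mem ⟨degB (1 + F), 1 + F, one_add_ne_zero F hF, mul_one_add_self F, rfl⟩
  obtain ⟨G, hG0, hFG, hdeg⟩ := hmem
  exact ⟨G, hG0, hFG, hdeg.symm⟩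

/-- key perturbation lemma -/
lemma LDA_perturb {n d : ℕ} (F δ' G : BF n) (hG : G ≠ 0) (hFG : F * G = 0)
    (h1 : wtB δ' < 2 ^ (n - degB G)) (h2 : wtB δ' ≤ 2 ^ (d+1) - 2) :
    LDA (F + δ') ≤ degB G + d := by
  classical
  have hwG := wtB_lower G hG
  have hnotsub : ¬ (Finset.univ.filter (fun x => G x = 1))
      ⊆ (Finset.univ.filter (fun x => δ' x = 1)) := by
    intro hsub
    have := Finset.card_le_card hsub
    have hlt : wtB δ' < wtB G := lt_of_lt_of_le h1 hwG
    rw [wtB, wtB] at hlt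
    omega
  obtain ⟨x₀, hx₀G, hx₀δ⟩ := Finset.not_subset.mp hnotsub
  rw [Finset.mem_filter] at hx₀G
  have hGx₀ : G x₀ = 1 := hx₀G.2
  have hδx₀ : x₀ ∉ Finset.univ.filter (fun x => δ' x = 1) := hx₀δ
  have hTcard : (Finset.univ.filter (fun x => δ' x = 1)).card ≤ 2 ^ (d+1) - 2 := h2
  obtain ⟨q, hqd, hqx₀, hqT⟩ := interp x₀ d (Finset.univ.filter (fun x => δ' x = 1)) hδx₀ hTcard
  set h : BF n := fun x => MvPolynomial.eval x q with hh
  have hdh : degB h ≤ d := le_trans (degB_le h q (fun x => rfl)) hqd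
  have hGh0 : G * h ≠ 0 := by
    intro hz
    have := congrFun hz x₀
    rw [Pi.mul_apply, hGx₀, hh] at this
    simp only [Pi.zero_apply] at this
    rw [hqx₀] at this
    exact absurd this (by decide)
  have hann : (F + δ') * (G * h) = 0 := by
    funext x
    simp only [Pi.mul_apply, Pi.add_apply, Pi.zero_apply]
    rcases zmod2_cases (δ' x) with hδ | hδ
    · have hFGx : F x * G x = 0 := by
        have := congrFun hFG x
        simpa using this
      rw [hδ, add_zero, ← mul_assoc, hFGx, zero_mul]
    · have hhx : h x = 0 := by
        rw [hh]
        exact hqT x (Finset.mem_filter.mpr ⟨Finset.mem_univ x, hδ⟩)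
      rw [hhx, mul_zero, mul_zero]
  calc LDA (F + δ') ≤ degB (G * h) := LDA_le' _ _ hGh0 hann
    _ ≤ degB G + degB h := degB_mul G h
    _ ≤ degB G + d := by omega

lemma LDA_le_of_small {n d : ℕ} (F : BF n) (hF : F ≠ 1) (h : wtB F ≤ 2 ^ (d+1) - 2) :
    LDA F ≤ d := by
  classical
  obtain ⟨x₀, hx₀⟩ := Function.ne_iff.mp hF
  have hx₀0 : F x₀ = 0 := by
    rcases zmod2_cases (F x₀) with h1 | h1
    · exact h1
    · exact absurd (by simpa using h1) hx₀
  have hδx₀ : x₀ ∉ Finset.univ.filter (fun x => F x = 1) := by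
    rw [Finset.mem_filter]
    rintro ⟨-, h1⟩
    rw [hx₀0] at h1
    exact absurd h1 (by decide)
  obtain ⟨q, hqd, hqx₀, hqT⟩ := interp x₀ d (Finset.univ.filter (fun x => F x = 1)) hδx₀ h
  set g : BF n := fun x => MvPolynomial.eval x q with hg
  have hg0 : g ≠ 0 := by
    intro hz
    have := congrFun hz x₀
    rw [hg] at this
    simp only [Pi.zero_apply] at this
    rw [hqx₀] at this
    exact absurd this (by decide)
  have hann : F * g = 0 := by
    funext x
    simp only [Pi.mul_apply, Pi.zero_apply]
    rcases zmod2_cases (F x) with h1 | h1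
    · rw [h1, zero_mul]
    · have : g x = 0 := by
        rw [hg]
        exact hqT x (Finset.mem_filter.mpr ⟨Finset.mem_univ x, h1⟩)
      rw [this, mul_zero]
  exact le_trans (LDA_le' F g hg0 hann) (le_trans (degB_le g q (fun x => rfl)) hqd)

theorem stmt8 {n k d : ℕ} (hk : 1 ≤ k) (hd : 1 ≤ d) (f δ : BF n)
    (hAI : AI f = k)
    (hw : wtB δ < min (2 ^ (n - k)) (2 ^ (d + 1) - 1)) :
    |(AI (f + δ) : ℤ) - (AI f : ℤ)| ≤ d := by
  classical
  rw [hAI]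
  have w1 : wtB δ < 2 ^ (n - k) := lt_of_lt_of_le hw (min_le_left _ _)
  have w2 : wtB δ < 2 ^ (d+1) - 1 := lt_of_lt_of_le hw (min_le_right _ _)
  have w2' : wtB δ ≤ 2 ^ (d+1) - 2 := by
    have h2 := two_le_pow d
    revert w2
    generalize wtB δ = c
    intro w2
    clear * - w2 h2
    omega
  -- f is not constant
  have hf0 : f ≠ 0 := by
    rintro rfl
    rw [AI] at hAI
    have : LDA (0 : BF n) = 0 := LDA_zero
    have := min_le_left (LDA (0 : BF n)) (LDA (1 + 0 : BF n))
    omega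
  have hf1 : f ≠ 1 := by
    rintro rfl
    rw [AI] at hAI
    have h11 : (1 + 1 : BF n) = 0 := by
      funext x
      simp only [Pi.add_apply, Pi.one_apply, Pi.zero_apply]
      decide
    rw [h11, LDA_zero] at hAI
    have := min_le_right (LDA (1 : BF n)) 0
    omega
  have hkLDAf : k ≤ LDA f := by
    rw [AI] at hAI
    have := min_le_left (LDA f) (LDA (1 + f))
    omega
  have hkLDA1f : k ≤ LDA (1 + f) := by
    rw [AI] at hAI
    have := min_le_right (LDA f) (LDA (1 + f))
    omega
  -- degenerate cases : f + δ constant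
  by_cases hc0 : f + δ = 0
  · have hfδ : f = δ := by
      funext x
      have := congrFun hc0 x
      simp only [Pi.add_apply, Pi.zero_apply] at this
      rcases zmod2_cases (f x) with h1 | h1 <;> rcases zmod2_cases (δ x) with h2 | h2 <;>
        rw [h1, h2] <;> rw [h1, h2] at this <;> first | rfl | (exact absurd this (by decide))
    have hwf : wtB f ≤ 2 ^ (d+1) - 2 := by rw [hfδ]; exact w2'
    have hkd : k ≤ d := le_trans hkLDAf (LDA_le_of_small f hf1 hwf)
    rw [hc0]
    have hAI0 : AI (0 : BF n) = 0 := by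
      rw [AI, LDA_zero]
      simp
    rw [hAI0]
    rw [abs_le]
    constructor <;> push_cast <;> omega
  by_cases hc1 : f + δ = 1
  · have hfδ : 1 + f = δ := by
      funext x
      have := congrFun hc1 x
      simp only [Pi.add_apply, Pi.one_apply] at this ⊢
      rcases zmod2_cases (f x) with h1 | h1 <;> rcases zmod2_cases (δ x) with h2 | h2 <;>
        rw [h1, h2] <;> rw [h1, h2] at this <;> first | rfl | (exact absurd this (by decide)) | decide
    have h1f1 : (1 + f : BF n) ≠ 1 := by
      intro h
      apply hf0
      funext x
      have := congrFun h x
      simp only [Pi.add_apply, Pi.one_apply, Pi.zero_apply] at this ⊢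
      rcases zmod2_cases (f x) with h1 | h1
      · exact h1
      · rw [h1] at this; exact absurd this (by decide)
    have hwf : wtB (1 + f) ≤ 2 ^ (d+1) - 2 := by rw [hfδ]; exact w2'
    have hkd : k ≤ d := le_trans hkLDA1f (LDA_le_of_small (1 + f) h1f1 hwf)
    rw [hc1]
    have hAI1 : AI (1 : BF n) = 0 := by
      rw [AI]
      have h11 : (1 + 1 : BF n) = 0 := by
        funext x
        simp only [Pi.add_apply, Pi.one_apply, Pi.zero_apply]
        decide
      rw [h11, LDA_zero]
      simp
    rw [hAI1]
    rw [abs_le]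
    constructor <;> push_cast <;> omega
  -- main case
  have hub : AI (f + δ) ≤ k + d := by
    rcases le_total (LDA f) (LDA (1 + f)) with hle | hle
    · have hLf : LDA f = k := by
        rw [AI, min_eq_left hle] at hAI
        exact hAI
      obtain ⟨G, hG0, hFG, hdG⟩ := annihilator_exists f hf1
      rw [hLf] at hdG
      have := LDA_perturb f δ G hG0 hFG (by rw [hdG]; exact w1) w2'
      rw [hdG] at this
      calc AI (f + δ) ≤ LDA (f + δ) := min_le_left _ _
        _ ≤ k + d := this
    · have hLf : LDA (1 + f) = k := by
        rw [AI, min_eq_right hle] at hAI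
        exact hAI
      have h1f1 : (1 + f : BF n) ≠ 1 := by
        intro h
        apply hf0
        funext x
        have := congrFun h x
        simp only [Pi.add_apply, Pi.one_apply, Pi.zero_apply] at this ⊢
        rcases zmod2_cases (f x) with h1 | h1
        · exact h1
        · rw [h1] at this; exact absurd this (by decide)
      obtain ⟨G, hG0, hFG, hdG⟩ := annihilator_exists (1 + f) h1f1
      rw [hLf] at hdG
      have := LDA_perturb (1 + f) δ G hG0 hFG (by rw [hdG]; exact w1) w2'
      rw [hdG] at this
      have heq : (1 + f) + δ = 1 + (f + δ) := by rw [add_assoc]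
      rw [heq] at this
      calc AI (f + δ) ≤ LDA (1 + (f + δ)) := min_le_right _ _
        _ ≤ k + d := this
  have hlb : k ≤ AI (f + δ) + d := by
    by_contra hcon
    push_neg at hcon
    set m := AI (f + δ) with hm
    have hmk : m < k := by clear * - hcon; omega
    have hpow : 2 ^ (n - k) ≤ 2 ^ (n - m) :=
      Nat.pow_le_pow_right (by norm_num) (Nat.sub_le_sub_left (le_of_lt hmk) n)
    have hwm : wtB δ < 2 ^ (n - m) := lt_of_lt_of_le w1 hpow
    rcases le_total (LDA (f + δ)) (LDA (1 + (f + δ))) with hle | hle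
    · have hLm : LDA (f + δ) = m := by
        rw [hm, AI, min_eq_left hle]
      obtain ⟨G, hG0, hFG, hdG⟩ := annihilator_exists (f + δ) hc1
      rw [hLm] at hdG
      have key := LDA_perturb (f + δ) δ G hG0 hFG (by rw [hdG]; exact hwm) w2'
      have heq : (f + δ) + δ = f := by
        funext x
        simp only [Pi.add_apply]
        rw [add_assoc, zmod2_add_self, add_zero]
      rw [heq, hdG] at key
      have := le_trans hkLDAf key
      clear * - this hcon
      omega
    · have hLm : LDA (1 + (f + δ)) = m := by
        rw [hm, AI, min_eq_right hle]
      have hne1 : (1 + (f + δ) : BF n) ≠ 1 := by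
        intro h
        apply hc0
        funext x
        have := congrFun h x
        simp only [Pi.add_apply, Pi.one_apply, Pi.zero_apply] at this ⊢
        rcases zmod2_cases ((f + δ) x) with h1 | h1
        · simpa using h1
        · rw [Pi.add_apply] at h1
          rw [h1] at this
          exact absurd this (by decide)
      obtain ⟨G, hG0, hFG, hdG⟩ := annihilator_exists (1 + (f + δ)) hne1
      rw [hLm] at hdG
      have heqF : (1 + (f + δ) : BF n) = (1 + f) + δ := by rw [add_assoc]
      rw [heqF] at hFG
      have key := LDA_perturb ((1 + f) + δ) δ G hG0 hFG (by rw [hdG]; exact hwm) w2'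
      have heq : ((1 + f) + δ) + δ = 1 + f := by
        funext x
        simp only [Pi.add_apply]
        rw [add_assoc ((1:BF n) x + f x), zmod2_add_self, add_zero]
      rw [heq, hdG] at key
      have := le_trans hkLDA1f key
      clear * - this hcon
      omega
  rw [abs_le]
  constructor <;> push_cast <;> omega
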